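/- Every 4-conic simplicial complex is simply connected, i.e., its geometric realization is path-connected with trivial fundamental group. -/

import Mathlib

open Finset
open scoped Classical

/-- An abstract simplicial complex on vertex type `V`: a downward-closed family of
nonempty finite subsets of `V`. -/
structure SComplex (V : Type*) where
  faces : Set (Finset V)
  not_empty_mem : ∅ ∉ faces
  down_closed : ∀ {s t : Finset V}, s ∈ faces → t ⊆ s → t.Nonempty → t ∈ faces

namespace SComplex

variable {V W : Type*}

/-- The vertex set of a simplicial complex. -/
def vertexSet (K : SComplex V) : Set V := {v | {v} ∈ K.faces}

/-- The geometric realization of a simplicial complex, as the set of convex-combination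
coordinate functions supported on a simplex. -/
def realization (K : SComplex V) : Set (V → ℝ) :=
  {x | ∃ σ ∈ K.faces, (∀ v, 0 ≤ x v) ∧ (∀ v, v ∉ σ → x v = 0) ∧ (∑ v ∈ σ, x v) = 1}

/-- The geometric realization as a topological space. -/
abbrev space (K : SComplex V) : Type _ := ↥(K.realization)

/-- `L` is a subcomplex of `K`. -/
def IsSubcomplex (L K : SComplex V) : Prop := L.faces ⊆ K.faces

/-- A complex is `r`-conic (`r` an integer, possibly `-1`) if every subcomplex with at
most `r` vertices is contained in the closed star of some vertex. -/
def IsConic (K : SComplex V) (r : ℤ) : Prop :=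
  ∀ L : SComplex V, L.IsSubcomplex K → L.vertexSet.Finite →
    (L.vertexSet.ncard : ℤ) ≤ r →
    ∃ v ∈ K.vertexSet, ∀ σ ∈ L.faces, insert v σ ∈ K.faces

/-- The link of a vertex `v` in `K`. -/
def vertexLink (K : SComplex V) (v : V) : Set (Finset V) :=
  {τ ∈ K.faces | v ∉ τ ∧ insert v τ ∈ K.faces}

/-- A nonempty complex is `r`-ample if for every set `U` of at most `r` vertices and
every subcomplex `L` with vertices in `U`, some vertex `v` has a link whose simplices
contained in `U` are exactly those of `L`. -/
def IsAmple (K : SComplex V) (r : ℕ) : Prop :=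
  K.faces.Nonempty ∧
  ∀ U : Finset V, ↑U ⊆ K.vertexSet → U.card ≤ r →
    ∀ L : SComplex V, L.IsSubcomplex K → L.vertexSet ⊆ ↑U →
      ∃ v ∈ K.vertexSet, {τ ∈ K.vertexLink v | ↑τ ⊆ (U : Set V)} = L.faces

end SComplex

/-- A topological space is `n`-connected if it is nonempty and every continuous map
from the `k`-sphere, `0 ≤ k ≤ n`, is null-homotopic. -/
def NConnected (n : ℕ) (X : Type*) [TopologicalSpace X] : Prop :=
  Nonempty X ∧ ∀ k : ℕ, k ≤ n →
    ∀ f : C(Metric.sphere (0 : EuclideanSpace ℝ (Fin (k + 1))) 1, X),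
      f.Nullhomotopic

noncomputable section
open CategoryTheory
attribute [local instance] Path.Homotopic.setoid

namespace SCAux
variable {V : Type*}

/-- sum over any supporting finset is 1 -/
lemma sum_support (K : SComplex V) (x : V → ℝ) (hx : x ∈ K.realization)
    (s : Finset V) (hsupp : ∀ v ∉ s, x v = 0) : ∑ v ∈ s, x v = 1 := by
  obtain ⟨t, _ht, _hpos, hz, hsum⟩ := hx
  have h1 : ∑ v ∈ s ∪ t, x v = ∑ v ∈ s, x v :=
    (Finset.sum_subset Finset.subset_union_left (fun v _ hvs => hsupp v hvs)).symm
  have h2 : ∑ v ∈ s ∪ t, x v = ∑ v ∈ t, x v :=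
    (Finset.sum_subset Finset.subset_union_right (fun v _ hvt => hz v hvt)).symm
  rw [← h1, h2, hsum]

lemma nonneg (K : SComplex V) (x : K.space) (v : V) : 0 ≤ x.1 v := by
  obtain ⟨t, _, hpos, _, _⟩ := x.2; exact hpos v

/-- convex combination supported on a face is in the realization -/
lemma combo_mem (K : SComplex V) (x y : K.space) (s : Finset V) (hs : s ∈ K.faces)
    (hx : ∀ v ∉ s, x.1 v = 0) (hy : ∀ v ∉ s, y.1 v = 0) {t : ℝ} (ht0 : 0 ≤ t) (ht1 : t ≤ 1) :
    (fun v => (1 - t) * x.1 v + t * y.1 v) ∈ K.realization := by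
  refine ⟨s, hs, ?_, ?_, ?_⟩
  · intro v
    dsimp only
    have := nonneg K x v; have := nonneg K y v
    nlinarith
  · intro v hv; dsimp only; rw [hx v hv, hy v hv]; ring
  · dsimp only
    rw [Finset.sum_add_distrib, ← Finset.mul_sum, ← Finset.mul_sum,
      sum_support K x.1 x.2 s hx, sum_support K y.1 y.2 s hy]
    ring

/-- the linear segment path between two points supported on a common face -/
def segP (K : SComplex V) (x y : K.space) (s : Finset V) (hs : s ∈ K.faces)
    (hx : ∀ v ∉ s, x.1 v = 0) (hy : ∀ v ∉ s, y.1 v = 0) : Path x y where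
  toFun t := ⟨fun v => (1 - (t:ℝ)) * x.1 v + (t:ℝ) * y.1 v,
    combo_mem K x y s hs hx hy t.2.1 t.2.2⟩
  continuous_toFun := by
    refine Continuous.subtype_mk ?_ _
    refine continuous_pi fun v => ?_
    have : Continuous fun t : unitInterval => (t : ℝ) := continuous_subtype_val
    continuity
  source' := by
    refine Subtype.ext (funext fun v => ?_); simp
  target' := by
    refine Subtype.ext (funext fun v => ?_); simp

lemma segP_apply (K : SComplex V) (x y : K.space) (s : Finset V) (hs : s ∈ K.faces)
    (hx : ∀ v ∉ s, x.1 v = 0) (hy : ∀ v ∉ s, y.1 v = 0) (t : unitInterval) (v : V) :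
    ((segP K x y s hs hx hy) t).1 v = (1 - (t:ℝ)) * x.1 v + (t:ℝ) * y.1 v := rfl

lemma segP_supp (K : SComplex V) (x y : K.space) (s : Finset V) (hs : s ∈ K.faces)
    (hx : ∀ v ∉ s, x.1 v = 0) (hy : ∀ v ∉ s, y.1 v = 0) (t : unitInterval) :
    ∀ v ∉ s, ((segP K x y s hs hx hy) t).1 v = 0 := by
  intro v hv
  rw [segP_apply, hx v hv, hy v hv]; ring

/-- set of points supported on one of the faces in `F` -/
def supp (K : SComplex V) (F : Set (Finset V)) : Set K.space :=
  {x | ∃ s ∈ F, ∀ v ∉ s, x.1 v = 0}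

/-- main homotopy lemma: two paths living in a "star-shaped" collection of faces are
homotopic. -/
lemma paths_homotopic (K : SComplex V) (F : Set (Finset V)) (hFK : F ⊆ K.faces)
    (c : K.space) (hc : c ∈ supp K F)
    (hstar : ∀ s ∈ F, ∃ t ∈ F, s ⊆ t ∧ ∀ w ∉ t, c.1 w = 0)
    {x y : K.space} (p q : Path x y)
    (hp : Set.range p ⊆ supp K F) (hq : Set.range q ⊆ supp K F) :
    Path.Homotopic p q := by
  set S := supp K F with hS
  have combo_real : ∀ (t : unitInterval) (z : K.space), z ∈ S →
      (fun v => (1 - (t:ℝ)) * z.1 v + (t:ℝ) * c.1 v) ∈ K.realization := by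
    intro t z hz
    obtain ⟨s, hsF, hzs⟩ := hz
    obtain ⟨u, huF, hsu, hcu⟩ := hstar s hsF
    exact combo_mem K z c u (hFK huF) (fun v hv => hzs v (fun h => hv (hsu h))) hcu t.2.1 t.2.2
  have combo_S : ∀ (t : unitInterval) (z : K.space), z ∈ S → ∀ (h : _),
      (⟨fun v => (1 - (t:ℝ)) * z.1 v + (t:ℝ) * c.1 v, h⟩ : K.space) ∈ S := by
    intro t z hz h
    obtain ⟨s, hsF, hzs⟩ := hz
    obtain ⟨u, huF, hsu, hcu⟩ := hstar s hsF
    refine ⟨u, huF, fun v hv => ?_⟩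
    have : z.1 v = 0 := hzs v (fun hh => hv (hsu hh))
    simp only [this, hcu v hv]; ring
  haveI : ContractibleSpace ↥S := by
    rw [contractible_iff_id_nullhomotopic]
    refine ⟨⟨c, hc⟩, ⟨?_⟩⟩
    refine
      { toFun := fun q => ⟨⟨fun v => (1 - (q.1:ℝ)) * (q.2:K.space).1 v + (q.1:ℝ) * c.1 v,
          combo_real q.1 q.2.1 q.2.2⟩, combo_S q.1 q.2.1 q.2.2 _⟩
        continuous_toFun := ?_
        map_zero_left := ?_
        map_one_left := ?_ }
    · refine Continuous.subtype_mk (Continuous.subtype_mk (continuous_pi fun v => ?_) _) _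
      have h1 : Continuous fun q : unitInterval × ↥S => (q.1 : ℝ) :=
        continuous_subtype_val.comp continuous_fst
      have h2 : Continuous fun q : unitInterval × ↥S => (q.2 : K.space).1 v :=
        (continuous_apply v).comp
          (continuous_subtype_val.comp (continuous_subtype_val.comp continuous_snd))
      continuity
    · intro z
      refine Subtype.ext (Subtype.ext (funext fun v => ?_))
      simp
    · intro z
      refine Subtype.ext (Subtype.ext (funext fun v => ?_))
      simp
  have hx0 : x ∈ S := hp ⟨0, p.source⟩
  have hy0 : y ∈ S := hp ⟨1, p.target⟩
  let pS : Path (⟨x, hx0⟩ : ↥S) (⟨y, hy0⟩ : ↥S) :=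
    { toFun := fun t => ⟨p t, hp (Set.mem_range_self t)⟩
      continuous_toFun := p.continuous.subtype_mk _
      source' := Subtype.ext p.source
      target' := Subtype.ext p.target }
  let qS : Path (⟨x, hx0⟩ : ↥S) (⟨y, hy0⟩ : ↥S) :=
    { toFun := fun t => ⟨q t, hq (Set.mem_range_self t)⟩
      continuous_toFun := q.continuous.subtype_mk _
      source' := Subtype.ext q.source
      target' := Subtype.ext q.target }
  have h := SimplyConnectedSpace.paths_homotopic pS qS
  have hmap := h.map ⟨Subtype.val, continuous_subtype_val⟩
  have hpe : pS.map continuous_subtype_val = p := by ext t; rfl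
  have hqe : qS.map continuous_subtype_val = q := by ext t; rfl
  rwa [hpe, hqe] at hmap

/-- vertex point -/
def eV (K : SComplex V) (v : V) (h : ({v} : Finset V) ∈ K.faces) : K.space :=
  ⟨fun w => if w = v then 1 else 0,
    ⟨{v}, h, fun w => by dsimp only; split <;> norm_num,
      fun w hw => if_neg (by simpa using hw), by simp⟩⟩

lemma eV_supp (K : SComplex V) (v : V) (h : ({v} : Finset V) ∈ K.faces)
    {s : Finset V} (hvs : v ∈ s) : ∀ w ∉ s, (eV K v h).1 w = 0 := by
  intro w hw
  refine if_neg fun hh => hw ?_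
  subst hh; exact hvs

lemma eV_congr (K : SComplex V) {u v : V} (h : u = v) (hu : ({u} : Finset V) ∈ K.faces)
    (hv : ({v} : Finset V) ∈ K.faces) : eV K u hu = eV K v hv := by subst h; rfl

/-- the class of a path, as a morphism in the fundamental groupoid -/
def pcl {X : Type*} [TopologicalSpace X] {x y : X} (p : Path x y) :
    (⟨x⟩ : FundamentalGroupoid X) ⟶ ⟨y⟩ := ⟦p⟧

lemma pcl_comp {X : Type*} [TopologicalSpace X] {x y z : X} (p : Path x y) (q : Path y z) :
    pcl p ≫ pcl q = pcl (p.trans q) := (Path.Homotopic.Quotient.mk_trans p q).symm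

lemma pcl_refl {X : Type*} [TopologicalSpace X] (x : X) :
    pcl (Path.refl x) = 𝟙 (⟨x⟩ : FundamentalGroupoid X) := rfl

lemma pcl_sound {X : Type*} [TopologicalSpace X] {x y : X} {p q : Path x y}
    (h : Path.Homotopic p q) : pcl p = pcl q := Quotient.sound h

lemma obj_congr (K : SComplex V) {u v : V} (h : u = v) (hu : ({u} : Finset V) ∈ K.faces)
    (hv : ({v} : Finset V) ∈ K.faces) :
    (⟨eV K u hu⟩ : FundamentalGroupoid K.space) = ⟨eV K v hv⟩ := by
  subst h; rfl

lemma edgeL (K : SComplex V) {u w : V} (e : ({u, w} : Finset V) ∈ K.faces) :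
    ({u} : Finset V) ∈ K.faces :=
  K.down_closed e (by simp) ⟨u, by simp⟩

lemma edgeR (K : SComplex V) {u w : V} (e : ({u, w} : Finset V) ∈ K.faces) :
    ({w} : Finset V) ∈ K.faces :=
  K.down_closed e (by simp) ⟨w, by simp⟩

/-- the edge path between two vertices -/
def eP (K : SComplex V) (u w : V) (e : ({u, w} : Finset V) ∈ K.faces) :
    Path (eV K u (edgeL K e)) (eV K w (edgeR K e)) :=
  segP K _ _ {u, w} e (eV_supp K u _ (by simp)) (eV_supp K w _ (by simp))

/-- the edge morphism in the fundamental groupoid -/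
def E (K : SComplex V) (u w : V) (e : ({u, w} : Finset V) ∈ K.faces) :
    (⟨eV K u (edgeL K e)⟩ : FundamentalGroupoid K.space) ⟶ ⟨eV K w (edgeR K e)⟩ :=
  pcl (eP K u w e)

lemma segP_refl (K : SComplex V) (x : K.space) (s : Finset V) (hs : s ∈ K.faces)
    (hx : ∀ v ∉ s, x.1 v = 0) : segP K x x s hs hx hx = Path.refl x := by
  ext t v
  show (1 - (t:ℝ)) * x.1 v + (t:ℝ) * x.1 v = x.1 v
  ring

lemma E_eq (K : SComplex V) {u w : V} (h : w = u) (e : ({u, w} : Finset V) ∈ K.faces) :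
    E K u w e = eqToHom (obj_congr K h.symm (edgeL K e) (edgeR K e)) := by
  subst h
  rw [eqToHom_refl]
  have hrfl : eP K w w e = Path.refl (eV K w (edgeL K e)) := by
    ext t v
    show (1 - (t:ℝ)) * (eV K w (edgeL K e)).1 v + (t:ℝ) * (eV K w (edgeR K e)).1 v
        = (eV K w (edgeL K e)).1 v
    show (1 - (t:ℝ)) * (if v = w then (1:ℝ) else 0) + (t:ℝ) * (if v = w then (1:ℝ) else 0)
        = (if v = w then (1:ℝ) else 0)
    ring
  show pcl (eP K w w e) = 𝟙 (⟨eV K w (edgeL K e)⟩ : FundamentalGroupoid K.space)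
  rw [hrfl, pcl_refl]

lemma segP_range_supp (K : SComplex V) {x y : K.space} {s : Finset V} {hs : s ∈ K.faces}
    {hx : ∀ v ∉ s, x.1 v = 0} {hy : ∀ v ∉ s, y.1 v = 0} {F : Set (Finset V)} (hsF : s ∈ F) :
    Set.range (segP K x y s hs hx hy) ⊆ supp K F := by
  rintro z ⟨t, rfl⟩
  exact ⟨s, hsF, segP_supp K x y s hs hx hy t⟩

lemma E_pair (K : SComplex V) {u w a : V} (h : a = u)
    (e1 : ({u, w} : Finset V) ∈ K.faces) (e2 : ({w, a} : Finset V) ∈ K.faces) :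
    E K u w e1 ≫ E K w a e2 = eqToHom (obj_congr K h.symm (edgeL K e1) (edgeR K e2)) := by
  subst h
  rw [eqToHom_refl]
  show pcl ((eP K a w e1).trans (eP K w a e2)) = pcl (Path.refl (eV K a (edgeL K e1)))
  refine pcl_sound ?_
  refine paths_homotopic K {s | s ∈ K.faces ∧ s ⊆ {a, w}} (fun s hs => hs.1)
    (eV K a (edgeL K e1)) ⟨{a}, ⟨edgeL K e1, by simp⟩, eV_supp K a _ (by simp)⟩
    (fun s hs => ⟨{a, w}, ⟨e1, subset_rfl⟩, hs.2, eV_supp K a _ (by simp)⟩) _ _ ?_ ?_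
  · rw [Path.trans_range]
    refine Set.union_subset (segP_range_supp K ⟨e1, subset_rfl⟩)
      (segP_range_supp K ⟨e2, ?_⟩)
    intro v hv
    simp only [Finset.mem_insert, Finset.mem_singleton] at hv ⊢
    tauto
  · rintro z ⟨t, rfl⟩
    exact ⟨{a}, ⟨edgeL K e1, by simp⟩, fun v hv => eV_supp K a (edgeL K e1) (by simp) v hv⟩

/-- the conic property applied to the subcomplex generated by three faces -/
lemma conic_cone (K : SComplex V) (hK : K.IsConic 4) (s₁ s₂ s₃ : Finset V)
    (h1 : s₁ ∈ K.faces) (h2 : s₂ ∈ K.faces) (h3 : s₃ ∈ K.faces)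
    (hcard : (s₁ ∪ s₂ ∪ s₃).card ≤ 4) :
    ∃ z, ({z} : Finset V) ∈ K.faces ∧ ∀ s : Finset V, s.Nonempty →
      (s ⊆ s₁ ∨ s ⊆ s₂ ∨ s ⊆ s₃) → insert z s ∈ K.faces := by
  set L : SComplex V :=
    { faces := {s | s.Nonempty ∧ (s ⊆ s₁ ∨ s ⊆ s₂ ∨ s ⊆ s₃)}
      not_empty_mem := by
        intro h
        exact Finset.not_nonempty_empty h.1
      down_closed := by
        intro s t hs hts hne
        refine ⟨hne, ?_⟩
        rcases hs.2 with h | h | h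
        · exact Or.inl (hts.trans h)
        · exact Or.inr (Or.inl (hts.trans h))
        · exact Or.inr (Or.inr (hts.trans h)) } with hL
  have hsub : L.IsSubcomplex K := by
    intro s hs
    rcases hs.2 with h | h | h
    · exact K.down_closed h1 h hs.1
    · exact K.down_closed h2 h hs.1
    · exact K.down_closed h3 h hs.1
  have hvsub : L.vertexSet ⊆ ↑(s₁ ∪ s₂ ∪ s₃) := by
    intro v hv
    rcases hv.2 with h | h | h <;> simp only [Finset.coe_union, Set.mem_union] <;>
      [exact Or.inl (Or.inl (h (by simp))); exact Or.inl (Or.inr (h (by simp)));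
       exact Or.inr (h (by simp))]
  have hfin : L.vertexSet.Finite := Set.Finite.subset (Finset.finite_toSet _) hvsub
  have hncard : (L.vertexSet.ncard : ℤ) ≤ 4 := by
    have := Set.ncard_le_ncard hvsub (Finset.finite_toSet _)
    rw [Set.ncard_coe_finset] at this
    omega
  obtain ⟨z, hz, hcone⟩ := hK L hsub hfin hncard
  exact ⟨z, hz, fun s hne hsub' => hcone s ⟨hne, hsub'⟩⟩

/-- the key reduction: three consecutive edges can be replaced by two, using 4-conicity -/
lemma tri_reduce (K : SComplex V) (hK : K.IsConic 4) (u₁ u₂ u₃ u₄ : V)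
    (e1 : ({u₁, u₂} : Finset V) ∈ K.faces) (e2 : ({u₂, u₃} : Finset V) ∈ K.faces)
    (e3 : ({u₃, u₄} : Finset V) ∈ K.faces) :
    ∃ (z : V) (ez1 : ({u₁, z} : Finset V) ∈ K.faces) (ez2 : ({z, u₄} : Finset V) ∈ K.faces),
      E K u₁ u₂ e1 ≫ (E K u₂ u₃ e2 ≫ E K u₃ u₄ e3) = E K u₁ z ez1 ≫ E K z u₄ ez2 := by
  have hcard : (({u₁, u₂} : Finset V) ∪ {u₂, u₃} ∪ {u₃, u₄}).card ≤ 4 := by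
    have hsub : (({u₁, u₂} : Finset V) ∪ {u₂, u₃} ∪ {u₃, u₄}) ⊆ {u₁, u₂, u₃, u₄} := by
      intro v hv
      simp only [Finset.mem_union, Finset.mem_insert, Finset.mem_singleton] at hv ⊢
      tauto
    refine le_trans (Finset.card_le_card hsub) ?_
    have h1 := Finset.card_insert_le u₁ ({u₂, u₃, u₄} : Finset V)
    have h2 := Finset.card_insert_le u₂ ({u₃, u₄} : Finset V)
    have h3 := Finset.card_insert_le u₃ ({u₄} : Finset V)
    have h4 : ({u₄} : Finset V).card = 1 := Finset.card_singleton u₄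
    omega
  obtain ⟨z, hz, hcone⟩ := conic_cone K hK {u₁, u₂} {u₂, u₃} {u₃, u₄} e1 e2 e3 hcard
  have ez1 : ({u₁, z} : Finset V) ∈ K.faces := by
    rw [Finset.pair_comm]
    exact hcone {u₁} (by simp) (Or.inl (by simp))
  have ez2 : ({z, u₄} : Finset V) ∈ K.faces :=
    hcone {u₄} (by simp) (Or.inr (Or.inr (by simp)))
  have hT1 : insert z ({u₁, u₂} : Finset V) ∈ K.faces := hcone _ (by simp) (Or.inl subset_rfl)
  have hT2 : insert z ({u₂, u₃} : Finset V) ∈ K.faces :=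
    hcone _ (by simp) (Or.inr (Or.inl subset_rfl))
  have hT3 : insert z ({u₃, u₄} : Finset V) ∈ K.faces :=
    hcone _ (by simp) (Or.inr (Or.inr subset_rfl))
  refine ⟨z, ez1, ez2, ?_⟩
  show pcl ((eP K u₁ u₂ e1).trans ((eP K u₂ u₃ e2).trans (eP K u₃ u₄ e3))) =
      pcl ((eP K u₁ z ez1).trans (eP K z u₄ ez2))
  refine pcl_sound ?_
  set F : Set (Finset V) :=
    {s | s ∈ K.faces ∧ (s ⊆ insert z {u₁, u₂} ∨ s ⊆ insert z {u₂, u₃} ∨ s ⊆ insert z {u₃, u₄})}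
    with hF
  have hzF : ∀ s ∈ F, ∃ t ∈ F, s ⊆ t ∧ ∀ w ∉ t, (eV K z hz).1 w = 0 := by
    intro s hs
    rcases hs.2 with h | h | h
    · exact ⟨insert z {u₁, u₂}, ⟨hT1, Or.inl subset_rfl⟩, h, eV_supp K z hz (by simp)⟩
    · exact ⟨insert z {u₂, u₃}, ⟨hT2, Or.inr (Or.inl subset_rfl)⟩, h, eV_supp K z hz (by simp)⟩
    · exact ⟨insert z {u₃, u₄}, ⟨hT3, Or.inr (Or.inr subset_rfl)⟩, h, eV_supp K z hz (by simp)⟩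
  refine paths_homotopic K F (fun s hs => hs.1) (eV K z hz)
    ⟨{z}, ⟨hz, Or.inl (by simp)⟩, eV_supp K z hz (by simp)⟩ hzF _ _ ?_ ?_
  · rw [Path.trans_range, Path.trans_range]
    refine Set.union_subset (segP_range_supp K ⟨e1, Or.inl ?_⟩)
      (Set.union_subset (segP_range_supp K ⟨e2, Or.inr (Or.inl ?_)⟩)
        (segP_range_supp K ⟨e3, Or.inr (Or.inr ?_)⟩)) <;> exact Finset.subset_insert _ _
  · rw [Path.trans_range]
    refine Set.union_subset (segP_range_supp K ⟨ez1, Or.inl ?_⟩)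
      (segP_range_supp K ⟨ez2, Or.inr (Or.inr ?_)⟩)
    · intro v hv
      simp only [Finset.mem_insert, Finset.mem_singleton] at hv ⊢
      tauto
    · intro v hv
      simp only [Finset.mem_insert, Finset.mem_singleton] at hv ⊢
      tauto

/-- composite of a chain of edge morphisms -/
def chainHom (K : SComplex V) : (m : ℕ) → (f : ℕ → V) →
    (hv : ∀ i, ({f i} : Finset V) ∈ K.faces) →
    (he : ∀ i, i < m → ({f i, f (i + 1)} : Finset V) ∈ K.faces) →
    ((⟨eV K (f 0) (hv 0)⟩ : FundamentalGroupoid K.space) ⟶ ⟨eV K (f m) (hv m)⟩)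
  | 0, _, _, _ => 𝟙 _
  | (m + 1), f, hv, he =>
    E K (f 0) (f 1) (he 0 (Nat.succ_pos m)) ≫
      chainHom K m (fun i => f (i + 1)) (fun i => hv (i + 1)) (fun i hi => he (i + 1) (by omega))

lemma chainHom_succ (K : SComplex V) : ∀ (m : ℕ) (f : ℕ → V)
    (hv : ∀ i, ({f i} : Finset V) ∈ K.faces)
    (he : ∀ i, i < m + 1 → ({f i, f (i + 1)} : Finset V) ∈ K.faces),
    chainHom K (m + 1) f hv he =
      chainHom K m f hv (fun i hi => he i (by omega)) ≫
        E K (f m) (f (m + 1)) (he m (by omega)) := by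
  intro m
  induction m with
  | zero =>
    intro f hv he
    show E K (f 0) (f 1) _ ≫ 𝟙 _ = 𝟙 _ ≫ E K (f 0) (f 1) _
    rw [Category.comp_id, Category.id_comp]
  | succ n ih =>
    intro f hv he
    show E K (f 0) (f 1) _ ≫ chainHom K (n + 1) (fun i => f (i + 1)) _ _ = _
    rw [ih]
    show E K (f 0) (f 1) _ ≫
        (chainHom K n (fun i => f (i + 1)) _ _ ≫ E K (f (n + 1)) (f (n + 2)) _) =
      (E K (f 0) (f 1) _ ≫ chainHom K n (fun i => f (i + 1)) _ _) ≫
        E K (f (n + 1)) (f (n + 2)) _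
    rw [Category.assoc]

/-- any edge loop is trivial in the fundamental groupoid, by 4-conicity -/
lemma chainHom_loop (K : SComplex V) (hK : K.IsConic 4) : ∀ (m : ℕ) (f : ℕ → V)
    (hv : ∀ i, ({f i} : Finset V) ∈ K.faces)
    (he : ∀ i, i < m → ({f i, f (i + 1)} : Finset V) ∈ K.faces) (hlp : f m = f 0),
    chainHom K m f hv he = eqToHom (obj_congr K hlp.symm (hv 0) (hv m)) := by
  intro m
  induction m using Nat.strong_induction_on with
  | _ m ih =>
    match m with
    | 0 =>
      intro f hv he hlp
      rfl
    | 1 =>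
      intro f hv he hlp
      show E K (f 0) (f 1) _ ≫ 𝟙 _ = _
      rw [Category.comp_id, E_eq K hlp]
    | 2 =>
      intro f hv he hlp
      show E K (f 0) (f 1) _ ≫ (E K (f 1) (f 2) _ ≫ 𝟙 _) = _
      rw [Category.comp_id, E_pair K hlp]
    | (k + 3) =>
      intro f hv he hlp
      obtain ⟨z, ez1, ez2, hred⟩ := tri_reduce K hK (f 0) (f 1) (f 2) (f 3)
        (he 0 (by omega)) (he 1 (by omega)) (he 2 (by omega))
      -- the shortened chain
      set g : ℕ → V := fun i => match i with
        | 0 => f 0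
        | 1 => z
        | (j + 2) => f (j + 3) with hg
      have hvg : ∀ i, ({g i} : Finset V) ∈ K.faces := by
        intro i
        match i with
        | 0 => exact hv 0
        | 1 => exact edgeR K ez1
        | (j + 2) => exact hv (j + 3)
      have heg : ∀ i, i < k + 2 → ({g i, g (i + 1)} : Finset V) ∈ K.faces := by
        intro i hi
        match i with
        | 0 => exact ez1
        | 1 => exact ez2
        | (j + 2) => exact he (j + 3) (by omega)
      have hlpg : g (k + 2) = g 0 := hlp
      have hkey := ih (k + 2) (by omega) g hvg heg hlpg
      have hmain : chainHom K (k + 3) f hv he = chainHom K (k + 2) g hvg heg := by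
        show E K (f 0) (f 1) _ ≫ (E K (f 1) (f 2) _ ≫ (E K (f 2) (f 3) _ ≫
            chainHom K k (fun i => f (i + 3)) _ _)) =
          E K (g 0) (g 1) _ ≫ (E K (g 1) (g 2) _ ≫
            chainHom K k (fun i => g (i + 2)) _ _)
        have h2 : (E K (f 0) (f 1) (he 0 (by omega)) ≫ (E K (f 1) (f 2) (he 1 (by omega)) ≫
            E K (f 2) (f 3) (he 2 (by omega)))) ≫
              chainHom K k (fun i => f (i + 3)) (fun i => hv (i + 3))
                (fun i hi => he (i + 3) (by omega)) =
          (E K (f 0) z ez1 ≫ E K z (f 3) ez2) ≫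
            chainHom K k (fun i => f (i + 3)) (fun i => hv (i + 3))
              (fun i hi => he (i + 3) (by omega)) := by
          rw [hred]
        simpa only [Category.assoc] using h2
      rw [hmain, hkey]

section Subpaths
variable {X : Type*} [TopologicalSpace X]

lemma comboI (a b s : unitInterval) : (1 - (s:ℝ)) * a + (s:ℝ) * b ∈ unitInterval := by
  constructor
  · have h1 := a.2.1; have h2 := b.2.1; have h3 := s.2.1; have h4 := s.2.2
    nlinarith
  · have h1 := a.2.2; have h2 := b.2.2; have h3 := s.2.1; have h4 := s.2.2
    nlinarith

/-- affine subpath of a path -/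
def subp {x y : X} (p : Path x y) (a b : unitInterval) : Path (p a) (p b) where
  toFun s := p ⟨(1 - (s:ℝ)) * a + (s:ℝ) * b, comboI a b s⟩
  continuous_toFun := by
    refine p.continuous.comp (Continuous.subtype_mk ?_ _)
    have : Continuous fun s : unitInterval => (s : ℝ) := continuous_subtype_val
    continuity
  source' := by
    refine congrArg p (Subtype.ext ?_); simp
  target' := by
    refine congrArg p (Subtype.ext ?_); simp

lemma subp_apply {x y : X} (p : Path x y) (a b : unitInterval) (s : unitInterval) :
    subp p a b s = p ⟨(1 - (s:ℝ)) * a + (s:ℝ) * b, comboI a b s⟩ := rfl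

lemma classCast {x y x' y' : X} (p : Path x y) (q : Path x' y')
    (hx : x = x') (hy : y = y') (h : ∀ s, p s = q s) :
    pcl p =
      eqToHom (show (⟨x⟩ : FundamentalGroupoid X) = ⟨x'⟩ by rw [hx]) ≫
        pcl q ≫
        eqToHom (show (⟨y'⟩ : FundamentalGroupoid X) = ⟨y⟩ by rw [hy]) := by
  subst hx; subst hy
  have hpq : p = q := by ext s; exact h s
  subst hpq
  rw [eqToHom_refl, eqToHom_refl, Category.comp_id, Category.id_comp]

/-- splitting a subpath at an intermediate time, up to homotopy -/
lemma subp_trans {x y : X} (p : Path x y) (a m b : unitInterval)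
    (ham : (a:ℝ) ≤ m) (hmb : (m:ℝ) ≤ b) (hab : (a:ℝ) < b) :
    pcl (subp p a b) = pcl (subp p a m) ≫ pcl (subp p m b) := by
  have hba : (0:ℝ) < (b:ℝ) - a := by linarith
  have hba' : ((b:ℝ) - a) ≠ 0 := ne_of_gt hba
  set α : ℝ := ((m:ℝ) - a) / ((b:ℝ) - a) with hα
  set β : ℝ := ((b:ℝ) - m) / ((b:ℝ) - a) with hβ
  have hα0 : 0 ≤ α := div_nonneg (by linarith) (le_of_lt hba)
  have hβ0 : 0 ≤ β := div_nonneg (by linarith) (le_of_lt hba)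
  have hαβ : α + β = 1 := by
    rw [hα, hβ, ← add_div]
    field_simp
    ring
  have hmem : ∀ s : unitInterval,
      (if (s:ℝ) ≤ 1/2 then (2*(s:ℝ))*α else α + (2*(s:ℝ) - 1)*β) ∈ unitInterval := by
    intro s
    have h3 := s.2.1; have h4 := s.2.2
    split_ifs with h
    · constructor
      · positivity
      · nlinarith
    · push_neg at h
      constructor
      · nlinarith
      · nlinarith
  set f : unitInterval → unitInterval :=
    fun s => ⟨if (s:ℝ) ≤ 1/2 then (2*(s:ℝ))*α else α + (2*(s:ℝ) - 1)*β, hmem s⟩ with hfdef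
  have hf : Continuous f := by
    refine Continuous.subtype_mk ?_ _
    have hc : Continuous fun s : unitInterval => (s : ℝ) := continuous_subtype_val
    refine Continuous.if_le ?_ ?_ hc continuous_const ?_
    · continuity
    · continuity
    · intro s hs
      rw [hs]; ring
  have hf0 : f 0 = 0 := by
    refine Subtype.ext ?_
    show (if ((0:unitInterval):ℝ) ≤ 1/2 then _ else _) = _
    norm_num
  have hf1 : f 1 = 1 := by
    refine Subtype.ext ?_
    show (if ((1:unitInterval):ℝ) ≤ 1/2 then _ else _) = _
    norm_num
    linarith
  have heq : (subp p a b).reparam f hf hf0 hf1 = (subp p a m).trans (subp p m b) := by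
    ext s
    rw [Path.trans_apply]
    show subp p a b (f s) = _
    rw [subp_apply]
    split_ifs with h
    · rw [subp_apply]
      refine congrArg p (Subtype.ext ?_)
      show (1 - (f s : ℝ)) * a + (f s : ℝ) * b = (1 - (2*(s:ℝ))) * a + (2*(s:ℝ)) * m
      have hfs : (f s : ℝ) = (2*(s:ℝ))*α := by
        show (if (s:ℝ) ≤ 1/2 then (2*(s:ℝ))*α else α + (2*(s:ℝ) - 1)*β) = _
        rw [if_pos h]
      rw [hfs, hα]
      field_simp
      ring
    · rw [subp_apply]
      refine congrArg p (Subtype.ext ?_)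
      show (1 - (f s : ℝ)) * a + (f s : ℝ) * b = (1 - (2*(s:ℝ) - 1)) * m + (2*(s:ℝ) - 1) * b
      have hfs : (f s : ℝ) = α + (2*(s:ℝ) - 1)*β := by
        show (if (s:ℝ) ≤ 1/2 then (2*(s:ℝ))*α else α + (2*(s:ℝ) - 1)*β) = _
        rw [if_neg h]
      rw [hfs, hα, hβ]
      field_simp
      ring
  rw [pcl_comp, ← heq]
  exact pcl_sound ⟨Path.Homotopy.reparam (subp p a b) f hf hf0 hf1⟩

end Subpaths

variable {V : Type*}

lemma point_pos (K : SComplex V) (x : K.space) : ∃ v, 0 < x.1 v := by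
  obtain ⟨s, hs, hpos, hz, hsum⟩ := x.2
  obtain ⟨v, _, hne⟩ := Finset.exists_ne_zero_of_sum_ne_zero
    (by rw [hsum]; exact one_ne_zero : ∑ v ∈ s, x.1 v ≠ 0)
  exact ⟨v, lt_of_le_of_ne (hpos v) (Ne.symm hne)⟩

lemma vertex_face_of_pos (K : SComplex V) (x : K.space) (v : V) (h : 0 < x.1 v) :
    ({v} : Finset V) ∈ K.faces := by
  obtain ⟨s, hs, hpos, hz, hsum⟩ := x.2
  have hv : v ∈ s := by
    by_contra hv
    rw [hz v hv] at h
    exact lt_irrefl 0 h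
  exact K.down_closed hs (Finset.singleton_subset_iff.mpr hv) ⟨v, by simp⟩

/-- a chosen supporting face of a point -/
def cFace (K : SComplex V) (x : K.space) : Finset V := x.2.choose

lemma cFace_mem (K : SComplex V) (x : K.space) : cFace K x ∈ K.faces := x.2.choose_spec.1

lemma cFace_supp (K : SComplex V) (x : K.space) : ∀ v ∉ cFace K x, x.1 v = 0 :=
  x.2.choose_spec.2.2.1

lemma mem_cFace (K : SComplex V) (x : K.space) {v : V} (h : 0 < x.1 v) : v ∈ cFace K x := by
  by_contra hv
  rw [cFace_supp K x v hv] at h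
  exact lt_irrefl 0 h

/-- the straight segment from a point to a vertex of its supporting face -/
def segTo (K : SComplex V) (x : K.space) (v : V) (h : 0 < x.1 v) :
    Path x (eV K v (vertex_face_of_pos K x v h)) :=
  segP K x _ (cFace K x) (cFace_mem K x) (cFace_supp K x)
    (eV_supp K v _ (mem_cFace K x h))

lemma pair_face_of_pos (K : SComplex V) (x : K.space) (a b : V)
    (ha : 0 < x.1 a) (hb : 0 < x.1 b) : ({a, b} : Finset V) ∈ K.faces := by
  refine K.down_closed (cFace_mem K x) ?_ ⟨a, by simp⟩
  intro w hw
  simp only [Finset.mem_insert, Finset.mem_singleton] at hw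
  rcases hw with rfl | rfl
  · exact mem_cFace K x ha
  · exact mem_cFace K x hb

lemma exists_vertex (K : SComplex V) (hK : K.IsConic 4) : ∃ v, ({v} : Finset V) ∈ K.faces := by
  set L : SComplex V :=
    { faces := ∅
      not_empty_mem := Set.notMem_empty _
      down_closed := fun hs _ _ => absurd hs (Set.notMem_empty _) } with hL
  have hvempty : L.vertexSet = ∅ := Set.eq_empty_iff_forall_notMem.mpr
    (fun v hv => Set.notMem_empty _ hv)
  obtain ⟨v, hv, -⟩ := hK L (fun s hs => absurd hs (Set.notMem_empty _))
    (by rw [hvempty]; exact Set.finite_empty) (by rw [hvempty]; simp)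
  exact ⟨v, hv⟩

lemma joined_to_vertex (K : SComplex V) (x : K.space) :
    ∃ (v : V) (hv : ({v} : Finset V) ∈ K.faces), Joined x (eV K v hv) := by
  obtain ⟨v, hv⟩ := point_pos K x
  exact ⟨v, vertex_face_of_pos K x v hv, ⟨segTo K x v hv⟩⟩

lemma vertices_joined (K : SComplex V) (hK : K.IsConic 4) (u w : V)
    (hu : ({u} : Finset V) ∈ K.faces) (hw : ({w} : Finset V) ∈ K.faces) :
    Joined (eV K u hu) (eV K w hw) := by
  obtain ⟨z, hz, hcone⟩ := conic_cone K hK {u} {w} {w} hu hw hw (by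
    refine le_trans (Finset.card_le_card (by intro a ha; simp at ha ⊢; tauto :
      ({u} ∪ {w} ∪ {w} : Finset V) ⊆ {u, w})) ?_
    refine le_trans (Finset.card_insert_le _ _) ?_
    simp)
  have e1 : ({z, u} : Finset V) ∈ K.faces := hcone {u} (by simp) (Or.inl subset_rfl)
  have e2 : ({z, w} : Finset V) ∈ K.faces := hcone {w} (by simp) (Or.inr (Or.inl subset_rfl))
  have j1 : Joined (eV K z (edgeL K e1)) (eV K u (edgeR K e1)) := ⟨eP K z u e1⟩
  have j2 : Joined (eV K z (edgeL K e2)) (eV K w (edgeR K e2)) := ⟨eP K z w e2⟩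
  exact Joined.trans (Joined.symm j1) j2

lemma path_connected (K : SComplex V) (hK : K.IsConic 4) : PathConnectedSpace K.space := by
  obtain ⟨v₀, hv₀⟩ := exists_vertex K hK
  refine ⟨⟨eV K v₀ hv₀⟩, fun x y => ?_⟩
  obtain ⟨a, ha, hxa⟩ := joined_to_vertex K x
  obtain ⟨b, hb, hyb⟩ := joined_to_vertex K y
  exact (hxa.trans (vertices_joined K hK a b ha hb)).trans hyb.symm

lemma loops_trivial (K : SComplex V) (hK : K.IsConic 4) (v₀ : V)
    (hv₀ : ({v₀} : Finset V) ∈ K.faces)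
    (γ : Path (eV K v₀ hv₀) (eV K v₀ hv₀)) :
    pcl γ = 𝟙 (⟨eV K v₀ hv₀⟩ : FundamentalGroupoid K.space) := by
  classical
  -- open cover by open stars
  have hopen : ∀ v : V, IsOpen {z : K.space | 0 < z.1 v} := by
    intro v
    exact isOpen_lt continuous_const ((continuous_apply v).comp continuous_subtype_val)
  have hcov : (Set.univ : Set unitInterval) ⊆ ⋃ v : V, γ ⁻¹' {z : K.space | 0 < z.1 v} := by
    intro s _
    obtain ⟨v, hv⟩ := point_pos K (γ s)
    exact Set.mem_iUnion.mpr ⟨v, hv⟩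
  obtain ⟨δ, hδ, hball⟩ := lebesgue_number_lemma_of_metric isCompact_univ
    (fun v => (hopen v).preimage γ.continuous) hcov
  obtain ⟨n, hn⟩ := exists_nat_gt (1 / δ)
  have hδ0 : 0 < 1 / δ := by positivity
  have hn0 : 0 < (n : ℝ) := lt_trans hδ0 hn
  have hn1 : 1 ≤ n := by exact_mod_cast Nat.one_le_iff_ne_zero.mpr (by
    intro h; rw [h] at hn0; norm_num at hn0)
  have hδn : 1 / (n : ℝ) < δ := by
    rw [div_lt_iff₀ hn0]
    rw [div_lt_iff₀ hδ] at hn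
    linarith
  -- subdivision points
  have tmem : ∀ i : ℕ, min ((i : ℝ) / n) 1 ∈ unitInterval :=
    fun i => ⟨le_min (by positivity) zero_le_one, min_le_right _ _⟩
  set t : ℕ → unitInterval := fun i => ⟨min ((i : ℝ) / n) 1, tmem i⟩ with htdef
  have tmono : ∀ {i j : ℕ}, i ≤ j → t i ≤ t j := by
    intro i j hij
    show min ((i : ℝ) / n) 1 ≤ min ((j : ℝ) / n) 1
    have hij' : (i : ℝ) ≤ j := by exact_mod_cast hij
    gcongr
  have ht0 : t 0 = 0 := Subtype.ext (by
    show min ((0 : ℕ) / (n : ℝ)) 1 = 0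
    norm_num)
  have htlast : ∀ {i : ℕ}, n ≤ i → t i = 1 := by
    intro i hi
    refine Subtype.ext ?_
    show min ((i : ℝ) / n) 1 = 1
    rw [min_eq_right]
    rw [le_div_iff₀ hn0, one_mul]
    exact_mod_cast hi
  have htn : t n = 1 := htlast le_rfl
  have hstep : ∀ i : ℕ, ((t (i + 1) : ℝ)) - ((t i : ℝ)) ≤ 1 / n := by
    intro i
    show min (((i + 1 : ℕ) : ℝ) / n) 1 - min ((i : ℝ) / n) 1 ≤ 1 / n
    rcases le_total ((i : ℝ) / n) 1 with h | h
    · rw [min_eq_left h]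
      refine le_trans (sub_le_sub_right (min_le_left _ _) _) (le_of_eq ?_)
      push_cast
      ring
    · have h1 : (1 : ℝ) ≤ ((i + 1 : ℕ) : ℝ) / n := by
        refine le_trans h ?_
        gcongr
        · push_cast; linarith
      rw [min_eq_right h, min_eq_right h1]
      simp
  -- choice of star vertices
  have harc : ∀ i : ℕ, ∃ v : V, ∀ s : unitInterval, t i ≤ s → s ≤ t (i + 1) →
      0 < (γ s).1 v := by
    intro i
    obtain ⟨v, hv⟩ := hball (t i) (Set.mem_univ _)
    refine ⟨v, fun s h1 h2 => ?_⟩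
    have h1' : ((t i : ℝ)) ≤ s := h1
    have h2' : (s : ℝ) ≤ t (i + 1) := h2
    have hmem : s ∈ Metric.ball (t i) δ := by
      rw [Metric.mem_ball, Subtype.dist_eq, Real.dist_eq,
        abs_of_nonneg (sub_nonneg.mpr h1')]
      have := hstep i
      linarith
    exact hv hmem
  choose varc hvarc using harc
  set u : ℕ → V := fun i => varc (min i (n - 1)) with hudef
  have harc2 : ∀ (i : ℕ) (s : unitInterval), t i ≤ s → s ≤ t (i + 1) →
      0 < (γ s).1 (u i) := by
    intro i s h1 h2
    refine hvarc (min i (n - 1)) s (le_trans (tmono (min_le_left i (n - 1))) h1)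
      (le_trans h2 ?_)
    rcases le_or_gt i (n - 1) with h | h
    · rw [min_eq_left h]
    · rw [min_eq_right (le_of_lt h)]
      rw [htlast (by omega : n ≤ i + 1), htlast (by omega : n ≤ (n - 1) + 1)]
  have hpos : ∀ i, 0 < (γ (t i)).1 (u i) :=
    fun i => harc2 i (t i) le_rfl (tmono (Nat.le_succ i))
  have hpos2 : ∀ i, 0 < (γ (t (i + 1))).1 (u i) :=
    fun i => harc2 i (t (i + 1)) (tmono (Nat.le_succ i)) le_rfl
  have hvert : ∀ i, ({u i} : Finset V) ∈ K.faces :=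
    fun i => vertex_face_of_pos K _ _ (hpos i)
  have hedge : ∀ i, ({u i, u (i + 1)} : Finset V) ∈ K.faces :=
    fun i => pair_face_of_pos K (γ (t (i + 1))) _ _ (hpos2 i) (hpos (i + 1))
  -- endpoints
  have hγ0 : γ (t 0) = eV K v₀ hv₀ := by rw [ht0]; exact γ.source
  have hγn : γ (t n) = eV K v₀ hv₀ := by rw [htn]; exact γ.target
  have hu0 : u 0 = v₀ := by
    have h := hpos 0
    rw [hγ0] at h
    by_contra hne
    rw [show (eV K v₀ hv₀).1 (u 0) = 0 from if_neg hne] at h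
    exact lt_irrefl 0 h
  have hun : u n = v₀ := by
    have h := hpos n
    rw [hγn] at h
    by_contra hne
    rw [show (eV K v₀ hv₀).1 (u n) = 0 from if_neg hne] at h
    exact lt_irrefl 0 h
  -- range of the subpaths
  have hsubrange : ∀ i, Set.range (subp γ (t i) (t (i + 1))) ⊆
      supp K {s | s ∈ K.faces ∧ u i ∈ s} := by
    intro i
    rintro z ⟨s, rfl⟩
    rw [subp_apply]
    have hab : ((t i : ℝ)) ≤ t (i + 1) := tmono (Nat.le_succ i)
    have h3 := s.2.1
    have h4 := s.2.2
    have hw1 : t i ≤ (⟨(1 - (s : ℝ)) * (t i) + (s : ℝ) * (t (i + 1)),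
        comboI _ _ s⟩ : unitInterval) := by
      show ((t i : ℝ)) ≤ (1 - (s : ℝ)) * (t i) + (s : ℝ) * (t (i + 1))
      nlinarith
    have hw2 : (⟨(1 - (s : ℝ)) * (t i) + (s : ℝ) * (t (i + 1)),
        comboI _ _ s⟩ : unitInterval) ≤ t (i + 1) := by
      show (1 - (s : ℝ)) * (t i) + (s : ℝ) * (t (i + 1)) ≤ ((t (i + 1) : ℝ))
      nlinarith
    have hp := harc2 i _ hw1 hw2
    exact ⟨cFace K _, ⟨cFace_mem K _, mem_cFace K _ hp⟩, cFace_supp K _⟩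
  -- the local comparison
  have hC : ∀ i, pcl (subp γ (t i) (t (i + 1))) ≫
          pcl (segTo K (γ (t (i + 1))) (u (i + 1)) (hpos (i + 1))) =
      pcl (segTo K (γ (t i)) (u i) (hpos i)) ≫ E K (u i) (u (i + 1)) (hedge i) := by
    intro i
    show pcl ((subp γ (t i) (t (i + 1))).trans
        (segTo K (γ (t (i + 1))) (u (i + 1)) (hpos (i + 1)))) =
      pcl ((segTo K (γ (t i)) (u i) (hpos i)).trans (eP K (u i) (u (i + 1)) (hedge i)))
    refine pcl_sound ?_
    refine paths_homotopic K {s | s ∈ K.faces ∧ u i ∈ s} (fun s hs => hs.1)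
      (eV K (u i) (hvert i)) ⟨{u i}, ⟨hvert i, by simp⟩, eV_supp K _ _ (by simp)⟩
      (fun s hs => ⟨s, hs, subset_rfl, eV_supp K _ _ hs.2⟩) _ _ ?_ ?_
    · rw [Path.trans_range]
      exact Set.union_subset (hsubrange i)
        (segP_range_supp K ⟨cFace_mem K _, mem_cFace K _ (hpos2 i)⟩)
    · rw [Path.trans_range]
      exact Set.union_subset
        (segP_range_supp K ⟨cFace_mem K _, mem_cFace K _ (hpos i)⟩)
        (segP_range_supp K ⟨hedge i, by simp⟩)
  -- the inductive accumulation
  have hQ : ∀ j, pcl (subp γ (t 0) (t j)) ≫ pcl (segTo K (γ (t j)) (u j) (hpos j)) =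
      pcl (segTo K (γ (t 0)) (u 0) (hpos 0)) ≫
        chainHom K j u hvert (fun i _ => hedge i) := by
    intro j
    induction j with
    | zero =>
      have hre : subp γ (t 0) (t 0) = Path.refl (γ (t 0)) := by
        ext s w
        show (γ ⟨(1 - (s : ℝ)) * (t 0) + (s : ℝ) * (t 0), comboI _ _ s⟩ : K.space).1 w
            = (γ (t 0)).1 w
        refine congrArg (fun z : K.space => z.1 w) (congrArg γ (Subtype.ext ?_))
        show (1 - (s : ℝ)) * (t 0) + (s : ℝ) * (t 0) = ((t 0 : ℝ))
        ring
      rw [hre, pcl_refl, Category.id_comp]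
      show _ = _ ≫ 𝟙 _
      rw [Category.comp_id]
    | succ j ih =>
      have hstrict : ((t 0 : ℝ)) < t (j + 1) := by
        rw [ht0]
        show (0 : ℝ) < min (((j + 1 : ℕ) : ℝ) / n) 1
        refine lt_min ?_ one_pos
        positivity
      have hsplit := subp_trans γ (t 0) (t j) (t (j + 1)) (tmono (Nat.zero_le j))
        (tmono (Nat.le_succ j)) hstrict
      rw [hsplit, Category.assoc, hC j, ← Category.assoc, ih, Category.assoc,
        chainHom_succ K j u hvert (fun i _ => hedge i)]
  -- conclusion
  have hlp : u n = u 0 := by rw [hun, hu0]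
  have hchain := chainHom_loop K hK n u hvert (fun i _ => hedge i) hlp
  have h1 : pcl (subp γ (t 0) (t n)) =
      (pcl (segTo K (γ (t 0)) (u 0) (hpos 0)) ≫
        chainHom K n u hvert (fun i _ => hedge i)) ≫
        inv (pcl (segTo K (γ (t n)) (u n) (hpos n))) :=
    (IsIso.eq_comp_inv _).mpr (hQ n)
  have hd0 : pcl (segTo K (γ (t 0)) (u 0) (hpos 0)) =
      eqToHom (show (⟨γ (t 0)⟩ : FundamentalGroupoid K.space) = ⟨eV K v₀ hv₀⟩ by
        rw [hγ0]) ≫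
      pcl (Path.refl (eV K v₀ hv₀)) ≫
      eqToHom (show (⟨eV K v₀ hv₀⟩ : FundamentalGroupoid K.space) =
          ⟨eV K (u 0) (vertex_face_of_pos K (γ (t 0)) (u 0) (hpos 0))⟩ by
        rw [eV_congr K hu0 (vertex_face_of_pos K (γ (t 0)) (u 0) (hpos 0)) hv₀]) := by
    refine classCast _ (Path.refl (eV K v₀ hv₀)) hγ0 (eV_congr K hu0 _ _) ?_
    intro s
    refine Subtype.ext (funext fun v => ?_)
    show (1 - (s : ℝ)) * (γ (t 0)).1 v +
        (s : ℝ) * (eV K (u 0) (vertex_face_of_pos K (γ (t 0)) (u 0) (hpos 0))).1 v =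
      (eV K v₀ hv₀).1 v
    rw [eV_congr K hu0 (vertex_face_of_pos K (γ (t 0)) (u 0) (hpos 0)) hv₀, hγ0]
    ring
  have hdn : pcl (segTo K (γ (t n)) (u n) (hpos n)) =
      eqToHom (show (⟨γ (t n)⟩ : FundamentalGroupoid K.space) = ⟨eV K v₀ hv₀⟩ by
        rw [hγn]) ≫
      pcl (Path.refl (eV K v₀ hv₀)) ≫
      eqToHom (show (⟨eV K v₀ hv₀⟩ : FundamentalGroupoid K.space) =
          ⟨eV K (u n) (vertex_face_of_pos K (γ (t n)) (u n) (hpos n))⟩ by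
        rw [eV_congr K hun (vertex_face_of_pos K (γ (t n)) (u n) (hpos n)) hv₀]) := by
    refine classCast _ (Path.refl (eV K v₀ hv₀)) hγn (eV_congr K hun _ _) ?_
    intro s
    refine Subtype.ext (funext fun v => ?_)
    show (1 - (s : ℝ)) * (γ (t n)).1 v +
        (s : ℝ) * (eV K (u n) (vertex_face_of_pos K (γ (t n)) (u n) (hpos n))).1 v =
      (eV K v₀ hv₀).1 v
    rw [eV_congr K hun (vertex_face_of_pos K (γ (t n)) (u n) (hpos n)) hv₀, hγn]
    ring
  have hγeq : pcl γ =
      eqToHom (show (⟨eV K v₀ hv₀⟩ : FundamentalGroupoid K.space) = ⟨γ (t 0)⟩ by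
        rw [hγ0]) ≫
      pcl (subp γ (t 0) (t n)) ≫
      eqToHom (show (⟨γ (t n)⟩ : FundamentalGroupoid K.space) = ⟨eV K v₀ hv₀⟩ by
        rw [hγn]) := by
    refine classCast _ _ hγ0.symm hγn.symm ?_
    intro s
    rw [subp_apply]
    refine congrArg γ (Subtype.ext ?_)
    show (s : ℝ) = (1 - (s : ℝ)) * (t 0) + (s : ℝ) * (t n)
    rw [ht0, htn]
    show (s : ℝ) = (1 - (s : ℝ)) * ((0 : unitInterval) : ℝ) +
      (s : ℝ) * ((1 : unitInterval) : ℝ)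
    norm_num
  rw [hγeq, h1, hchain, hd0, hdn, pcl_refl]
  simp [eqToHom_trans, eqToHom_refl]

end SCAux
end

attribute [local instance] Path.Homotopic.setoid

open CategoryTheory in
/-- Every `4`-conic simplicial complex is simply connected: its
geometric realization is path-connected with trivial fundamental group. -/
theorem four_conic_implies_simply_connected {V : Type*} (K : SComplex V)
    (hK : K.IsConic 4) :
    SimplyConnectedSpace K.space := by
  obtain ⟨v₀, hv₀⟩ := SCAux.exists_vertex K hK
  have hpc : PathConnectedSpace K.space := SCAux.path_connected K hK
  rw [simply_connected_iff_paths_homotopic]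
  refine ⟨hpc, fun x y => ⟨fun P Q => ?_⟩⟩
  let c : K.space := SCAux.eV K v₀ hv₀
  let f : (⟨x⟩ : FundamentalGroupoid K.space) ⟶ ⟨y⟩ := P
  let g : (⟨x⟩ : FundamentalGroupoid K.space) ⟶ ⟨y⟩ := Q
  let a : (⟨x⟩ : FundamentalGroupoid K.space) ⟶ ⟨c⟩ :=
    SCAux.pcl (hpc.somePath x c)
  let b : (⟨y⟩ : FundamentalGroupoid K.space) ⟶ ⟨c⟩ :=
    SCAux.pcl (hpc.somePath y c)
  have loopid : ∀ W : (⟨c⟩ : FundamentalGroupoid K.space) ⟶ ⟨c⟩, W = 𝟙 _ := by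
    intro W
    obtain ⟨r, hr⟩ := Quotient.exists_rep W
    rw [← hr]
    exact SCAux.loops_trivial K hK v₀ hv₀ r
  have key : ∀ R : (⟨x⟩ : FundamentalGroupoid K.space) ⟶ ⟨y⟩,
      R = a ≫ (inv a ≫ R ≫ b) ≫ inv b := by
    intro R
    simp
  have hfg : f = g := by
    rw [key f, key g, loopid (inv a ≫ f ≫ b), loopid (inv a ≫ g ≫ b)]
  exact hfg
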